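/- arXiv:1509.03460 — 8 statements merged into one kernel-verified Lean document; each statement's English description precedes it below -/
import Mathlib

section
/- Let Γ be a finite-dimensional algebra of global dimension at most 2 over a field, and let Y be a Γ-module which is both generated by and cogenerated by a projective-injective Γ-module Q (i.e. there exist exact sequences 0 → X → I → Y → 0 and 0 → Y → P → Z → 0 with I, P in add(Q)). Then Y has projective dimension at most 1, injective dimension at most 1, and Ext¹_Γ(Y, Y) = 0. -/
universe u

section Aux
variable {R : Type u} [Ring R]

noncomputable def factorThru {T P Y : Type*} [AddCommGroup T] [AddCommGroup P] [AddCommGroup Y]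
    [Module R T] [Module R P] [Module R Y]
    (f : Y →ₗ[R] P) (hf : Function.Injective f) (w : T →ₗ[R] P)
    (mem : ∀ z, w z ∈ LinearMap.range f) : T →ₗ[R] Y :=
  (LinearEquiv.ofInjective f hf).symm.toLinearMap ∘ₗ
    LinearMap.codRestrict (LinearMap.range f) w mem

lemma factorThru_spec {T P Y : Type*} [AddCommGroup T] [AddCommGroup P] [AddCommGroup Y]
    [Module R T] [Module R P] [Module R Y]
    (f : Y →ₗ[R] P) (hf : Function.Injective f) (w : T →ₗ[R] P)
    (mem : ∀ z, w z ∈ LinearMap.range f) (z : T) :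
    f (factorThru f hf w mem z) = w z := by
  set_option linter.unnecessarySimpa false in
  simpa [factorThru] using
    LinearEquiv.ofInjective_symm_apply (h := hf) ⟨w z, mem z⟩

theorem projective_of_split_ses {M₁ N M₂ : Type u}
    [AddCommGroup M₁] [AddCommGroup N] [AddCommGroup M₂]
    [Module R M₁] [Module R N] [Module R M₂]
    [Module.Projective R M₁] [Module.Projective R M₂]
    (A : M₁ →ₗ[R] N) (B : N →ₗ[R] M₂) (C : M₂ →ₗ[R] N)
    (hA : Function.Injective A) (hBC : ∀ x, B (C x) = x) (hex : Function.Exact A B) :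
    Module.Projective R N := by
  have mem : ∀ z : N, (LinearMap.id - C ∘ₗ B : N →ₗ[R] N) z ∈ LinearMap.range A := by
    intro z
    refine (hex _).mp ?_
    simp [hBC (B z)]
  let a : N →ₗ[R] M₁ := factorThru A hA (LinearMap.id - C ∘ₗ B : N →ₗ[R] N) mem
  refine Module.Projective.of_split (LinearMap.prod a B) (LinearMap.coprod A C) ?_
  ext z
  have h1 : A (a z) = z - C (B z) := by
    simpa using factorThru_spec A hA (LinearMap.id - C ∘ₗ B : N →ₗ[R] N) mem z
  simp only [LinearMap.comp_apply, LinearMap.coprod_apply, LinearMap.prod_apply, Function.prod,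
    LinearMap.id_apply, h1]
  abel

/-- Given a projective resolution `0 → P₂ → P₁ → P₀ → Z → 0` of length two of `Z` and a
short exact sequence `0 → Y → P → Z → 0` with `P` projective, the module `Y` admits a
projective resolution of length one. -/
theorem syzygy_resolution {P₂ P₁ P₀ Z P Y : Type u}
    [AddCommGroup P₂] [AddCommGroup P₁] [AddCommGroup P₀] [AddCommGroup Z]
    [AddCommGroup P] [AddCommGroup Y]
    [Module R P₂] [Module R P₁] [Module R P₀] [Module R Z] [Module R P] [Module R Y]
    [Module.Projective R P₂] [Module.Projective R P₁] [Module.Projective R P₀]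
    [Module.Projective R P]
    (f₂ : P₂ →ₗ[R] P₁) (f₁ : P₁ →ₗ[R] P₀) (G : P₀ →ₗ[R] Z)
    (hf₂ : Function.Injective f₂) (hG : Function.Surjective G)
    (hex₂ : Function.Exact f₂ f₁) (hex₁ : Function.Exact f₁ G)
    (ι : Y →ₗ[R] P) (p : P →ₗ[R] Z) (hι : Function.Injective ι)
    (hp : Function.Surjective p) (hexp : Function.Exact ι p) :
    ∃ (S₁ S₀ : Type u) (_ : AddCommGroup S₁) (_ : AddCommGroup S₀)
      (_ : Module R S₁) (_ : Module R S₀),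
      Module.Projective R S₁ ∧ Module.Projective R S₀ ∧
      ∃ (u : S₁ →ₗ[R] S₀) (v : S₀ →ₗ[R] Y),
        Function.Injective u ∧ Function.Surjective v ∧ Function.Exact u v := by
  classical
  -- lifts between the two presentations of Z
  obtain ⟨γ, hγ⟩ := Module.projective_lifting_property G p hG
  obtain ⟨δ, hδ⟩ := Module.projective_lifting_property p G hp
  have hγ' : ∀ q, G (γ q) = p q := fun q => by rw [← LinearMap.comp_apply, hγ]
  have hδ' : ∀ x, p (δ x) = G x := fun x => by rw [← LinearMap.comp_apply, hδ]
  -- the map w : P₁ × P → P, (b,q) ↦ q - δ (f₁ b) - δ (γ q)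
  let Fst := LinearMap.fst R P₁ P
  let Snd := LinearMap.snd R P₁ P
  let w : P₁ × P →ₗ[R] P := Snd - (δ ∘ₗ f₁) ∘ₗ Fst - (δ ∘ₗ γ) ∘ₗ Snd
  have hw : ∀ b q, w (b, q) = q - δ (f₁ b) - δ (γ q) := fun b q => rfl
  have hGf₁ : ∀ b, G (f₁ b) = 0 := fun b => (hex₁ _).mpr ⟨b, rfl⟩
  have hwmem : ∀ z, w z ∈ LinearMap.range ι := by
    rintro ⟨b, q⟩
    refine (hexp _).mp ?_
    simp [hw, hδ', hγ', hGf₁]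
  let v : P₁ × P →ₗ[R] Y := factorThru ι hι w hwmem
  have hιv : ∀ z, ι (v z) = w z := factorThru_spec ι hι w hwmem
  -- v is surjective
  have hv : Function.Surjective v := by
    intro y
    have h0 : G (γ (ι y)) = 0 := by rw [hγ', (hexp (ι y)).mpr ⟨y, rfl⟩]
    obtain ⟨b, hb⟩ := (hex₁ _).mp h0
    refine ⟨(-b, ι y), hι ?_⟩
    rw [hιv, hw]
    simp [hb]
  -- the lift c : P₀ → P₁ with f₁ ∘ c = id - γ ∘ δ
  have htmem : ∀ x, (LinearMap.id - γ ∘ₗ δ : P₀ →ₗ[R] P₀) x ∈ LinearMap.range f₁ := by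
    intro x
    refine (hex₁ _).mp ?_
    simp [hγ', hδ']
  obtain ⟨c, hc⟩ := Module.projective_lifting_property f₁.rangeRestrict
    (LinearMap.codRestrict (LinearMap.range f₁) (LinearMap.id - γ ∘ₗ δ) htmem)
    f₁.surjective_rangeRestrict
  have hc' : ∀ x, f₁ (c x) = x - γ (δ x) := by
    intro x
    have := congrArg Subtype.val (congrFun (congrArg DFunLike.coe hc) x)
    simpa using this
  -- the three structure maps of the split exact sequence P₂ → ker v → P₀
  let A : P₂ →ₗ[R] P₁ × P := LinearMap.prod f₂ 0
  let B : P₁ × P →ₗ[R] P₀ := f₁ ∘ₗ Fst + γ ∘ₗ Snd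
  let C : P₀ →ₗ[R] P₁ × P := LinearMap.prod c δ
  have hf₁f₂ : ∀ t, f₁ (f₂ t) = 0 := fun t => (hex₂ _).mpr ⟨t, rfl⟩
  have hAmem : ∀ t, A t ∈ LinearMap.ker v := by
    intro t
    have : w (A t) = 0 := by
      show w (f₂ t, 0) = 0
      rw [hw]; simp [hf₁f₂]
    rw [LinearMap.mem_ker, ← hι.eq_iff, hιv, this, map_zero]
  have hCmem : ∀ x, C x ∈ LinearMap.ker v := by
    intro x
    have : w (C x) = 0 := by
      show w (c x, δ x) = 0
      rw [hw, hc']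
      simp
    rw [LinearMap.mem_ker, ← hι.eq_iff, hιv, this, map_zero]
  let A' : P₂ →ₗ[R] LinearMap.ker v := LinearMap.codRestrict _ A hAmem
  let C' : P₀ →ₗ[R] LinearMap.ker v := LinearMap.codRestrict _ C hCmem
  let B' : LinearMap.ker v →ₗ[R] P₀ := B ∘ₗ (LinearMap.ker v).subtype
  have hA' : Function.Injective A' := by
    intro s t hst
    have := congrArg (Fst ∘ Subtype.val) hst
    exact hf₂ this
  have hB'C' : ∀ x, B' (C' x) = x := by
    intro x
    show f₁ (c x) + γ (δ x) = x
    rw [hc']; abel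
  have hexA'B' : Function.Exact A' B' := by
    intro z
    constructor
    · intro hz
      obtain ⟨⟨b, q⟩, hzv⟩ := z
      have hwz : q - δ (f₁ b) - δ (γ q) = 0 := by
        have : ι (v (b, q)) = ι 0 := by rw [hzv, map_zero]
        rw [hιv, hw] at this
        simpa using this
      have hBz : f₁ b + γ q = 0 := hz
      have hq : q = 0 := by
        have : q = δ (f₁ b) + δ (γ q) := by
          rw [sub_sub, sub_eq_zero] at hwz; exact hwz
        rw [← map_add, hBz, map_zero] at this
        exact this
      have hf₁b : f₁ b = 0 := by
        rw [hq, map_zero, add_zero] at hBz; exact hBz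
      obtain ⟨t, ht⟩ := (hex₂ _).mp hf₁b
      refine ⟨t, ?_⟩
      apply Subtype.ext
      show (f₂ t, (0 : P)) = (b, q)
      rw [ht, hq]
    · rintro ⟨t, rfl⟩
      show f₁ (f₂ t) + γ 0 = 0
      simp [hf₁f₂]
  haveI : Module.Projective R (LinearMap.ker v) :=
    projective_of_split_ses A' B' C' hA' hB'C' hexA'B'
  refine ⟨LinearMap.ker v, P₁ × P, inferInstance, inferInstance, inferInstance, inferInstance,
    inferInstance, inferInstance, (LinearMap.ker v).subtype, v,
    Submodule.injective_subtype _, hv, ?_⟩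
  exact LinearMap.exact_iff.mpr (Submodule.range_subtype _).symm
/-- Splitting lemma: a SES `0 → Y → E → M → 0` splits when `M` has a length-one projective
resolution and `Y` is a quotient of an injective module. -/
theorem ses_splits {S₁ S₀ M I Y E : Type u}
    [AddCommGroup S₁] [AddCommGroup S₀] [AddCommGroup M] [AddCommGroup I]
    [AddCommGroup Y] [AddCommGroup E]
    [Module R S₁] [Module R S₀] [Module R M] [Module R I] [Module R Y] [Module R E]
    [Module.Projective R S₁] [Module.Projective R S₀]
    (u : S₁ →ₗ[R] S₀) (v : S₀ →ₗ[R] M) (hu : Function.Injective u)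
    (hv : Function.Surjective v) (hexuv : Function.Exact u v)
    (hI : Module.Injective R I) (π : I →ₗ[R] Y) (hπ : Function.Surjective π)
    (f : Y →ₗ[R] E) (g : E →ₗ[R] M) (hf : Function.Injective f)
    (hg : Function.Surjective g) (hexfg : Function.Exact f g) :
    ∃ s : M →ₗ[R] E, ∀ m, g (s m) = m := by
  obtain ⟨h, hh⟩ := Module.projective_lifting_property g v hg
  have hhu : ∀ x, (h ∘ₗ u) x ∈ LinearMap.range f := by
    intro x
    refine (hexfg _).mp ?_
    have : g (h (u x)) = v (u x) := by rw [← LinearMap.comp_apply, hh]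
    rw [LinearMap.comp_apply, this, (hexuv (u x)).mpr ⟨x, rfl⟩]
  let φ₁ : S₁ →ₗ[R] Y := factorThru f hf (h ∘ₗ u) hhu
  obtain ⟨α, hα⟩ := Module.projective_lifting_property π φ₁ hπ
  obtain ⟨β, hβ⟩ := hI.out u hu α
  set h' : S₀ →ₗ[R] E := h - f ∘ₗ (π ∘ₗ β) with hh'
  have hker : LinearMap.ker v ≤ LinearMap.ker h' := by
    intro x hx
    obtain ⟨t, rfl⟩ := (hexuv x).mp hx
    have h1 : f (φ₁ t) = h (u t) := factorThru_spec f hf (h ∘ₗ u) hhu t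
    have h2 : π (β (u t)) = φ₁ t := by rw [hβ t, ← LinearMap.comp_apply, hα]
    simp only [LinearMap.mem_ker, hh', LinearMap.sub_apply, LinearMap.comp_apply, h2, h1,
      sub_self]
  let e := v.quotKerEquivOfSurjective hv
  let s : M →ₗ[R] E := ((LinearMap.ker v).liftQ h' hker) ∘ₗ e.symm.toLinearMap
  have hsv : ∀ x, s (v x) = h' x := by
    intro x
    have he : e (Submodule.Quotient.mk x) = v x := rfl
    have : e.symm (v x) = Submodule.Quotient.mk x := by
      rw [← he, LinearEquiv.symm_apply_apply]
    simp only [s, LinearMap.comp_apply, LinearEquiv.coe_coe, this, Submodule.liftQ_apply]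
  refine ⟨s, ?_⟩
  intro m
  obtain ⟨x, rfl⟩ := hv m
  rw [hsv x]
  have : g (f (π (β x))) = 0 := (hexfg _).mpr ⟨π (β x), rfl⟩
  simp only [hh', LinearMap.sub_apply, LinearMap.comp_apply, map_sub, this, sub_zero]
  rw [← LinearMap.comp_apply, hh]



theorem injective_pi {Q : Type u} [AddCommGroup Q] [Module R Q] (h : Module.Injective R Q)
    (n : ℕ) : Module.Injective R (Fin n → Q) := by
  constructor
  intro X Y _ _ _ _ f hf g
  choose H hH using fun i : Fin n => h.out f hf ((LinearMap.proj i) ∘ₗ g)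
  exact ⟨LinearMap.pi H, fun x => funext fun i => hH i x⟩

theorem projective_pi {Q : Type u} [AddCommGroup Q] [Module R Q] (h : Module.Projective R Q)
    (n : ℕ) : Module.Projective R (Fin n → Q) := by
  haveI : ∀ _i : Fin n, Module.Projective R Q := fun _ => h
  haveI : Module.Projective R (DirectSum (Fin n) (fun _ => Q)) :=
    (inferInstance : Module.Projective R (Π₀ _i : Fin n, Q))
  exact Module.Projective.of_equiv
    (DirectSum.linearEquivFunOnFintype R (Fin n) (fun _ => Q))


end Aux


/-- If `Γ` is a finite-dimensional algebra over a field `K` of global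
dimension at most `2`, and `Y` is a (finite-dimensional) `Γ`-module generated and
cogenerated by a projective-injective module `Q`, then `Y` has projective dimension `≤ 1`,
injective dimension `≤ 1`, and `Ext¹_Γ(Y, Y) = 0` (every self-extension splits). -/
theorem auslander_partial_tilting
    {K Γ : Type u} [Field K] [Ring Γ] [Algebra K Γ] [FiniteDimensional K Γ]
    -- global dimension ≤ 2: every module has a projective resolution of length ≤ 2
    (hgl : ∀ (M : Type u) (_ : AddCommGroup M) (_ : Module Γ M),
      ∃ (P₀ P₁ P₂ : Type u) (_ : AddCommGroup P₀) (_ : AddCommGroup P₁)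
        (_ : AddCommGroup P₂) (_ : Module Γ P₀) (_ : Module Γ P₁) (_ : Module Γ P₂),
        Module.Projective Γ P₀ ∧ Module.Projective Γ P₁ ∧ Module.Projective Γ P₂ ∧
        ∃ (f₂ : P₂ →ₗ[Γ] P₁) (f₁ : P₁ →ₗ[Γ] P₀) (g : P₀ →ₗ[Γ] M),
          Function.Injective f₂ ∧ Function.Surjective g ∧
          Function.Exact f₂ f₁ ∧ Function.Exact f₁ g)
    (Q Y : Type u) [AddCommGroup Q] [Module Γ Q] [AddCommGroup Y] [Module Γ Y]
    [Module K Y] [IsScalarTower K Γ Y] [FiniteDimensional K Y]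
    -- Q is projective-injective
    (hQproj : Module.Projective Γ Q) (hQinj : Module.Injective Γ Q)
    -- Y is generated by Q: a quotient of a finite direct sum of copies of Q
    (hgen : ∃ (n : ℕ) (g : (Fin n → Q) →ₗ[Γ] Y), Function.Surjective g)
    -- Y is cogenerated by Q: embeds in a finite direct sum of copies of Q
    (hcogen : ∃ (n : ℕ) (f : Y →ₗ[Γ] (Fin n → Q)), Function.Injective f) :
    -- projective dimension of Y is at most 1
    (∃ (P₀ P₁ : Type u) (_ : AddCommGroup P₀) (_ : AddCommGroup P₁)
       (_ : Module Γ P₀) (_ : Module Γ P₁),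
       Module.Projective Γ P₀ ∧ Module.Projective Γ P₁ ∧
       ∃ (f₁ : P₁ →ₗ[Γ] P₀) (g : P₀ →ₗ[Γ] Y),
         Function.Injective f₁ ∧ Function.Surjective g ∧ Function.Exact f₁ g) ∧
    -- injective dimension of Y is at most 1
    (∃ (I₀ I₁ : Type u) (_ : AddCommGroup I₀) (_ : AddCommGroup I₁)
       (_ : Module Γ I₀) (_ : Module Γ I₁),
       Module.Injective Γ I₀ ∧ Module.Injective Γ I₁ ∧
       ∃ (f : Y →ₗ[Γ] I₀) (g : I₀ →ₗ[Γ] I₁),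
         Function.Injective f ∧ Function.Surjective g ∧ Function.Exact f g) ∧
    -- Ext¹_Γ(Y, Y) = 0: every short exact sequence 0 → Y → E → Y → 0 splits
    (∀ (E : Type u) (_ : AddCommGroup E) (_ : Module Γ E)
       (f : Y →ₗ[Γ] E) (g : E →ₗ[Γ] Y),
       Function.Injective f → Function.Surjective g → Function.Exact f g →
       ∃ s : E →ₗ[Γ] Y, s.comp f = LinearMap.id) := by
  classical
  obtain ⟨m, ι, hι⟩ := hcogen
  obtain ⟨n, π, hπ⟩ := hgen
  have hPproj : Module.Projective Γ (Fin m → Q) := projective_pi hQproj m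
  have hPinj : Module.Injective Γ (Fin m → Q) := injective_pi hQinj m
  have hIinj : Module.Injective Γ (Fin n → Q) := injective_pi hQinj n
  -- the cokernel of the embedding ι : Y ↪ Qᵐ
  let Z := (Fin m → Q) ⧸ LinearMap.range ι
  let p : (Fin m → Q) →ₗ[Γ] Z := (LinearMap.range ι).mkQ
  have hp : Function.Surjective p := Submodule.mkQ_surjective _
  have hexp : Function.Exact ι p := LinearMap.exact_iff.mpr (Submodule.ker_mkQ _)
  -- the length-one projective resolution of Y
  obtain ⟨R₀, R₁, R₂, iR₀, iR₁, iR₂, mR₀, mR₁, mR₂, hR₀, hR₁, hR₂,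
    f₂, f₁, G, hf₂, hG, hex₂, hex₁⟩ := hgl Z inferInstance inferInstance
  obtain ⟨S₁, S₀, iS₁, iS₀, mS₁, mS₀, hS₁, hS₀, u, v, hu, hv, hexuv⟩ :=
    syzygy_resolution f₂ f₁ G hf₂ hG hex₂ hex₁ ι p hι hp hexp
  refine ⟨⟨S₀, S₁, iS₀, iS₁, mS₀, mS₁, hS₀, hS₁, u, v, hu, hv, hexuv⟩, ?_, ?_⟩
  · -- injective dimension ≤ 1 : 0 → Y → Qᵐ → Z → 0 with Z injective
    have hZinj : Module.Injective Γ Z := by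
      apply Module.Baer.injective
      intro J φ
      -- a length-one projective resolution of J
      obtain ⟨T₀, T₁, T₂, iT₀, iT₁, iT₂, mT₀, mT₁, mT₂, hT₀, hT₁, hT₂,
        g₂, g₁, GJ, hg₂, hGJ, hgex₂, hgex₁⟩ := hgl (Γ ⧸ J) inferInstance inferInstance
      have hexJ : Function.Exact J.subtype J.mkQ :=
        LinearMap.exact_iff.mpr (by rw [Submodule.ker_mkQ, Submodule.range_subtype])
      obtain ⟨U₁, U₀, iU₁, iU₀, mU₁, mU₀, hU₁, hU₀, uJ, vJ, huJ, hvJ, hexJres⟩ :=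
        syzygy_resolution g₂ g₁ GJ hg₂ hGJ hgex₂ hgex₁ J.subtype J.mkQ
          (Submodule.injective_subtype J) (Submodule.mkQ_surjective J) hexJ
      -- the pullback W of φ : J → Z and p : Qᵐ → Z
      let χ : (↥J × (Fin m → Q)) →ₗ[Γ] Z :=
        φ ∘ₗ LinearMap.fst Γ ↥J (Fin m → Q) - p ∘ₗ LinearMap.snd Γ ↥J (Fin m → Q)
      let W := LinearMap.ker χ
      have hpι : ∀ y : Y, p (ι y) = 0 := fun y => (hexp _).mpr ⟨y, rfl⟩
      have hfWmem : ∀ y : Y, ((0 : ↥J), ι y) ∈ W := by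
        intro y
        show φ 0 - p (ι y) = 0
        simp [hpι]
      let fW : Y →ₗ[Γ] W :=
        LinearMap.codRestrict _ (LinearMap.prod 0 ι) (fun y => hfWmem y)
      let gW : W →ₗ[Γ] ↥J := (LinearMap.fst Γ ↥J (Fin m → Q)) ∘ₗ W.subtype
      have hfW : Function.Injective fW := by
        intro a b hab
        have := congrArg (fun z : W => (z : ↥J × (Fin m → Q)).2) hab
        exact hι this
      have hgW : Function.Surjective gW := by
        intro a
        obtain ⟨q, hq⟩ := hp (φ a)
        refine ⟨⟨(a, q), ?_⟩, rfl⟩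
        show φ a - p q = 0
        rw [hq, sub_self]
      have hexfgW : Function.Exact fW gW := by
        rintro ⟨⟨a, q⟩, hmem⟩
        constructor
        · intro ha
          have ha' : a = 0 := ha
          have hmem' : φ a - p q = 0 := hmem
          rw [ha', map_zero, zero_sub, neg_eq_zero] at hmem'
          obtain ⟨y, hy⟩ := (hexp q).mp hmem'
          refine ⟨y, ?_⟩
          apply Subtype.ext
          show ((0 : ↥J), ι y) = (a, q)
          rw [ha', hy]
        · rintro ⟨y, hy⟩
          rw [← hy]
          rfl
      obtain ⟨s, hs⟩ := ses_splits uJ vJ huJ hvJ hexJres hIinj π hπ fW gW hfW hgW hexfgW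
      let φ' : ↥J →ₗ[Γ] (Fin m → Q) :=
        (LinearMap.snd Γ ↥J (Fin m → Q)) ∘ₗ W.subtype ∘ₗ s
      have hφ' : ∀ a, p (φ' a) = φ a := by
        intro a
        have hmem : φ ((s a : ↥J × (Fin m → Q)).1) - p ((s a : ↥J × (Fin m → Q)).2) = 0 :=
          (s a).2
        have h1 : (s a : ↥J × (Fin m → Q)).1 = a := hs a
        rw [h1] at hmem
        have := sub_eq_zero.mp hmem
        exact this.symm
      obtain ⟨Λ, hΛ⟩ := hPinj.out J.subtype (Submodule.injective_subtype J) φ'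
      refine ⟨p ∘ₗ Λ, ?_⟩
      intro x hx
      show p (Λ x) = φ ⟨x, hx⟩
      have : Λ x = φ' ⟨x, hx⟩ := hΛ ⟨x, hx⟩
      rw [this, hφ']
    exact ⟨Fin m → Q, Z, inferInstance, inferInstance, inferInstance, inferInstance,
      hPinj, hZinj, ι, p, hι, hp, hexp⟩
  · -- Ext¹(Y, Y) = 0
    intro E _ _ f g hf hg hexfg
    obtain ⟨s, hs⟩ := ses_splits u v hu hv hexuv hIinj π hπ f g hf hg hexfg
    have mem : ∀ e : E, (LinearMap.id - s ∘ₗ g : E →ₗ[Γ] E) e ∈ LinearMap.range f := by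
      intro e
      refine (hexfg _).mp ?_
      simp [hs (g e)]
    let r : E →ₗ[Γ] Y := factorThru f hf (LinearMap.id - s ∘ₗ g : E →ₗ[Γ] E) mem
    refine ⟨r, ?_⟩
    ext y
    apply hf
    have h1 : f (r (f y)) = f y - s (g (f y)) :=
      factorThru_spec f hf (LinearMap.id - s ∘ₗ g : E →ₗ[Γ] E) mem (f y)
    have h2 : g (f y) = 0 := (hexfg _).mpr ⟨y, rfl⟩
    simp only [LinearMap.comp_apply, LinearMap.id_apply, h1, h2, map_zero, sub_zero]
end

section
/- In a recollement of abelian categories with intermediate extension functor c, if N is an object of the middle category B with e(N) ≅ M, then N ≅ c(M) if and only if N has no non-zero subobject and no non-zero quotient object lying in the subcategory A = Ker(e). -/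
open CategoryTheory Limits

universe v u v₁ u₁ v₂ u₂

/-- A recollement of abelian categories, with the six functors, the four adjunctions,
the isomorphism conditions and the identification of `A` with `Ker e`. -/
structure Recollement (A : Type u) (B : Type u₁) (C : Type u₂)
    [Category.{v} A] [Category.{v₁} B] [Category.{v₂} C]
    [Abelian A] [Abelian B] [Abelian C] where
  i : A ⥤ B
  p : B ⥤ A
  q : B ⥤ A
  e : B ⥤ C
  l : C ⥤ B
  r : C ⥤ B
  adj_qi : q ⊣ i
  adj_ip : i ⊣ p
  adj_le : l ⊣ e
  adj_er : e ⊣ r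
  counit_er_iso : IsIso adj_er.counit
  unit_le_iso : IsIso adj_le.unit
  counit_qi_iso : IsIso adj_qi.counit
  unit_ip_iso : IsIso adj_ip.unit
  ker_e : ∀ b : B, (∃ a : A, Nonempty (i.obj a ≅ b)) ↔ IsZero (e.obj b)

namespace Recollement

variable {A : Type u} {B : Type u₁} {C : Type u₂}
    [Category.{v} A] [Category.{v₁} B] [Category.{v₂} C]
    [Abelian A] [Abelian B] [Abelian C] (R : Recollement A B C)

/-- The canonical map `ℓ(M) ⟶ r(M)`, adjoint to the inverse of the counit `e(r(M)) ≅ M`. -/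
noncomputable def γ (M : C) : R.l.obj M ⟶ R.r.obj M :=
  (R.adj_le.homEquiv M (R.r.obj M)).symm
    (letI := R.counit_er_iso; inv (R.adj_er.counit.app M))

/-- The intermediate extension `c(M) = Im(ℓ(M) → r(M))`. -/
noncomputable def c (M : C) : B := Limits.image (R.γ M)

end Recollement

variable {A : Type u} {B : Type u₁} {C : Type u₂}
    [Category.{v} A] [Category.{v₁} B] [Category.{v₂} C]
    [Abelian A] [Abelian B] [Abelian C]

/-- For `N` in the middle category with `e N ≅ M`, one has `N ≅ c M` if and only
if `N` has no non-zero subobject and no non-zero quotient object killed by `e`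
(i.e. lying in `A = Ker e`). -/
theorem recollement_iso_c_iff {R : Recollement A B C} {N : B} {M : C}
    (h : Nonempty (R.e.obj N ≅ M)) :
    Nonempty (N ≅ R.c M) ↔
      ((∀ (S : B) (f : S ⟶ N), Mono f → IsZero (R.e.obj S) → IsZero S) ∧
       (∀ (Q : B) (g : N ⟶ Q), Epi g → IsZero (R.e.obj Q) → IsZero Q)) := by
  obtain ⟨φ⟩ := h
  letI := R.counit_er_iso
  letI := R.unit_le_iso
  haveI : R.e.IsLeftAdjoint := R.adj_er.isLeftAdjoint
  haveI : R.e.IsRightAdjoint := R.adj_le.isRightAdjoint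
  constructor
  · rintro ⟨ψ⟩
    constructor
    · intro S f hf hS
      haveI := hf
      set g : S ⟶ R.r.obj M := f ≫ ψ.hom ≫ Limits.image.ι (R.γ M) with hg
      have hg0 : g = 0 := by
        calc g = (R.adj_er.homEquiv S M) ((R.adj_er.homEquiv S M).symm g) :=
              ((R.adj_er.homEquiv S M).apply_symm_apply g).symm
          _ = (R.adj_er.homEquiv S M) ((R.adj_er.homEquiv S M).symm 0) := by
              congr 1
              exact hS.eq_of_src _ _
          _ = 0 := (R.adj_er.homEquiv S M).apply_symm_apply 0
      haveI : Mono g := by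
        rw [hg]
        exact @mono_comp _ _ _ _ _ f hf _ (@mono_comp _ _ _ _ _ ψ.hom (IsIso.mono_of_iso _) _ (Limits.instMonoι _))
      rw [IsZero.iff_id_eq_zero]
      exact (cancel_mono g).1 (by simp [hg0])
    · intro Q q hq hQ
      haveI := hq
      set k : R.l.obj M ⟶ Q := Limits.factorThruImage (R.γ M) ≫ ψ.inv ≫ q with hk
      have hk0 : k = 0 := by
        calc k = (R.adj_le.homEquiv M Q).symm ((R.adj_le.homEquiv M Q) k) :=
              ((R.adj_le.homEquiv M Q).symm_apply_apply k).symm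
          _ = (R.adj_le.homEquiv M Q).symm ((R.adj_le.homEquiv M Q) 0) := by
              congr 1
              exact hQ.eq_of_tgt _ _
          _ = 0 := (R.adj_le.homEquiv M Q).symm_apply_apply 0
      haveI : Epi k := by rw [hk]; exact @epi_comp _ _ _ _ _ _ ⟨fun _ _ w => Limits.image.ext _ w⟩ _ (@epi_comp _ _ _ _ _ ψ.inv (IsIso.epi_of_iso _) q hq)
      rw [IsZero.iff_id_eq_zero]
      exact (cancel_epi k).1 (by simp [hk0])
  · rintro ⟨h1, h2⟩
    set α : R.l.obj M ⟶ N := R.l.map φ.inv ≫ R.adj_le.counit.app N with hα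
    set β : N ⟶ R.r.obj M := R.adj_er.unit.app N ≫ R.r.map φ.hom with hβ
    haveI : IsIso (R.e.map (R.adj_le.counit.app N)) := by
      rw [IsIso.eq_inv_of_hom_inv_id (R.adj_le.right_triangle_components N)]
      infer_instance
    haveI : IsIso (R.e.map (R.adj_er.unit.app N)) := by
      rw [IsIso.eq_inv_of_inv_hom_id (R.adj_er.left_triangle_components N)]
      infer_instance
    haveI hαiso : IsIso (R.e.map α) := by
      rw [hα, R.e.map_comp]
      infer_instance
    haveI hβiso : IsIso (R.e.map β) := by
      rw [hβ, R.e.map_comp]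
      infer_instance
    -- α is an epimorphism
    haveI hαepi : Epi α := by
      have hπ0 : R.e.map (cokernel.π α) = 0 := by
        have hc : R.e.map α ≫ R.e.map (cokernel.π α) = 0 := by
          rw [← R.e.map_comp, cokernel.condition, Functor.map_zero]
        exact zero_of_epi_comp (R.e.map α) hc
      have hQ : IsZero (R.e.obj (cokernel α)) := by
        rw [IsZero.iff_id_eq_zero]
        exact (cancel_epi (R.e.map (cokernel.π α))).1 (by simp [hπ0])
      have hz := h2 (cokernel α) (cokernel.π α) inferInstance hQ
      exact Abelian.epi_of_cokernel_π_eq_zero _ (hz.eq_of_tgt _ _)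
    -- β is a monomorphism
    haveI hβmono : Mono β := by
      have hι0 : R.e.map (kernel.ι β) = 0 := by
        have hc : R.e.map (kernel.ι β) ≫ R.e.map β = 0 := by
          rw [← R.e.map_comp, kernel.condition, Functor.map_zero]
        exact zero_of_comp_mono (R.e.map β) hc
      have hK : IsZero (R.e.obj (kernel β)) := by
        rw [IsZero.iff_id_eq_zero]
        exact (cancel_mono (R.e.map (kernel.ι β))).1 (by simp [hι0])
      have hz := h1 (kernel β) (kernel.ι β) inferInstance hK
      exact Abelian.mono_of_kernel_ι_eq_zero _ (hz.eq_of_src _ _)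
    -- the composite α ≫ β is the canonical map γ M
    have hγ : R.γ M = R.l.map (inv (R.adj_er.counit.app M)) ≫ R.adj_le.counit.app (R.r.obj M) := by
      simp only [Recollement.γ, Adjunction.homEquiv_counit]
    have key : φ.inv ≫ R.e.map (R.adj_er.unit.app N) ≫ R.e.map (R.r.map φ.hom)
        = inv (R.adj_er.counit.app M) := by
      rw [← cancel_mono (R.adj_er.counit.app M), IsIso.inv_hom_id, Category.assoc,
        Category.assoc, R.adj_er.counit_naturality φ.hom,
        ← Category.assoc (R.e.map (R.adj_er.unit.app N)),
        R.adj_er.left_triangle_components N]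
      simp
    have hcomp : α ≫ β = R.γ M := by
      rw [hγ, ← key, hα, hβ, R.l.map_comp, R.l.map_comp]
      simp only [Category.assoc]
      congr 1
      rw [R.adj_le.counit_naturality (R.r.map φ.hom),
        ← Category.assoc (R.l.map (R.e.map (R.adj_er.unit.app N)))]
      erw [R.adj_le.counit_naturality (R.adj_er.unit.app N)]
      simp
    haveI : StrongEpi α := strongEpi_of_epi α
    exact ⟨Limits.image.isoStrongEpiMono α β hcomp⟩
end

section
/- In a recollement of abelian categories, the intermediate extension functor c: C → B preserves epimorphisms and monomorphisms, and sends simple objects of C to simple objects of B. -/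
open CategoryTheory Limits

universe v u v₁ u₁ v₂ u₂

variable {A : Type u} {B : Type u₁} {C : Type u₂}
    [Category.{v} A] [Category.{v₁} B] [Category.{v₂} C]
    [Abelian A] [Abelian B] [Abelian C]

section Aux

variable (R : Recollement A B C)

/-- Any morphism from an object killed by `e` into `r M` vanishes. -/
lemma Recollement.hom_to_r_eq_zero {Y : B} (hY : IsZero (R.e.obj Y)) {M : C}
    (h : Y ⟶ R.r.obj M) : h = 0 := by
  haveI : Subsingleton (R.e.obj Y ⟶ M) := ⟨fun a b => hY.eq_of_src a b⟩
  haveI : Subsingleton (Y ⟶ R.r.obj M) := (R.adj_er.homEquiv Y M).symm.subsingleton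
  exact Subsingleton.elim _ _

/-- Any morphism from `l M` into an object killed by `e` vanishes. -/
lemma Recollement.hom_from_l_eq_zero {Y : B} (hY : IsZero (R.e.obj Y)) {M : C}
    (h : R.l.obj M ⟶ Y) : h = 0 := by
  haveI : Subsingleton (M ⟶ R.e.obj Y) := ⟨fun a b => hY.eq_of_tgt a b⟩
  haveI : Subsingleton (R.l.obj M ⟶ Y) := (R.adj_le.homEquiv M Y).subsingleton
  exact Subsingleton.elim _ _

lemma Recollement.unit_comp_e_map_γ (M : C) :
    R.adj_le.unit.app M ≫ R.e.map (R.γ M) =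
      (letI := R.counit_er_iso; inv (R.adj_er.counit.app M)) :=
  (R.adj_le.homEquiv M (R.r.obj M)).apply_symm_apply _

lemma Recollement.isIso_e_map_γ (M : C) : IsIso (R.e.map (R.γ M)) := by
  haveI := R.unit_le_iso
  haveI := R.counit_er_iso
  have h := R.unit_comp_e_map_γ M
  have : R.e.map (R.γ M) = inv (R.adj_le.unit.app M) ≫
      (letI := R.counit_er_iso; inv (R.adj_er.counit.app M)) := by
    rw [← h, IsIso.inv_hom_id_assoc]
  rw [this]
  infer_instance

lemma Recollement.isIso_e_map_image_ι (M : C) :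
    IsIso (R.e.map (Limits.image.ι (R.γ M))) ∧
      IsIso (R.e.map (factorThruImage (R.γ M))) := by
  haveI : R.e.PreservesEpimorphisms :=
    Functor.preservesEpimorphisms_of_adjunction R.adj_er
  haveI : R.e.PreservesMonomorphisms :=
    Functor.preservesMonomorphisms_of_adjunction R.adj_le
  haveI := R.isIso_e_map_γ M
  have hfac : R.e.map (factorThruImage (R.γ M)) ≫ R.e.map (Limits.image.ι (R.γ M)) =
      R.e.map (R.γ M) := by
    rw [← Functor.map_comp, Limits.image.fac]
  haveI : Epi (R.e.map (factorThruImage (R.γ M)) ≫ R.e.map (Limits.image.ι (R.γ M))) := by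
    rw [hfac]; infer_instance
  haveI : Epi (R.e.map (Limits.image.ι (R.γ M))) :=
    epi_of_epi (R.e.map (factorThruImage (R.γ M))) _
  haveI h1 : IsIso (R.e.map (Limits.image.ι (R.γ M))) := isIso_of_mono_of_epi _
  refine ⟨h1, ?_⟩
  have : R.e.map (factorThruImage (R.γ M)) =
      R.e.map (R.γ M) ≫ inv (R.e.map (Limits.image.ι (R.γ M))) := by
    rw [← hfac]; simp
  rw [this]
  infer_instance

end Aux

/-- The intermediate extension functor preserves epimorphisms and
monomorphisms, and sends simple objects to simple objects.  The map induced by `c` on a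
morphism `f : M ⟶ N` is characterized as the unique morphism `g : c M ⟶ c N` compatible
with the image factorizations `ℓ M ↠ c M ↪ r M` and `ℓ N ↠ c N ↪ r N`. -/
theorem recollement_c_preserves_epi_mono_simple (R : Recollement A B C) :
    (∀ (M N : C) (f : M ⟶ N) (g : R.c M ⟶ R.c N),
        Epi f → (factorThruImage (R.γ M) ≫ g = R.l.map f ≫ factorThruImage (R.γ N)) →
        Epi g) ∧
    (∀ (M N : C) (f : M ⟶ N) (g : R.c M ⟶ R.c N),
        Mono f → (g ≫ Limits.image.ι (R.γ N) = Limits.image.ι (R.γ M) ≫ R.r.map f) →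
        Mono g) ∧
    (∀ M : C, Simple M → Simple (R.c M)) := by
  refine ⟨?_, ?_, ?_⟩
  · -- epimorphisms
    intro M N f g hf hcomm
    haveI : R.l.PreservesEpimorphisms :=
      Functor.preservesEpimorphisms_of_adjunction R.adj_le
    haveI : Epi f := hf
    haveI : Epi (factorThruImage (R.γ M) ≫ g) := by rw [hcomm]; exact epi_comp (R.l.map f) (factorThruImage (R.γ N))
    exact epi_of_epi (factorThruImage (R.γ M)) g
  · -- monomorphisms
    intro M N f g hf hcomm
    haveI : R.r.PreservesMonomorphisms :=
      Functor.preservesMonomorphisms_of_adjunction R.adj_er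
    haveI : Mono f := hf
    haveI : Mono (g ≫ Limits.image.ι (R.γ N)) := by rw [hcomm]; exact mono_comp (Limits.image.ι (R.γ M)) (R.r.map f)
    exact mono_of_mono g (Limits.image.ι (R.γ N))
  · -- simples
    intro M hM
    haveI := hM
    haveI := R.counit_er_iso
    haveI := R.adj_er.isLeftAdjoint
    haveI : R.e.PreservesMonomorphisms :=
      Functor.preservesMonomorphisms_of_adjunction R.adj_le
    haveI : R.e.PreservesEpimorphisms :=
      Functor.preservesEpimorphisms_of_adjunction R.adj_er
    haveI hcolim : PreservesColimitsOfSize.{0, 0} R.e := R.adj_er.leftAdjoint_preservesColimits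
    obtain ⟨hι, hfac⟩ := R.isIso_e_map_image_ι M
    haveI := hι; haveI := hfac
    -- the iso `e (c M) ≅ M`
    set φ : R.e.obj (R.c M) ⟶ M :=
      R.e.map (Limits.image.ι (R.γ M)) ≫ R.adj_er.counit.app M with hφ
    haveI : IsIso φ := by
      rw [hφ]; exact (inferInstance : IsIso (R.e.map (Limits.image.ι (R.γ M)) ≫ R.adj_er.counit.app M))
    constructor
    intro Y u hu
    constructor
    · -- IsIso u → u ≠ 0
      intro h hzero
      haveI : Epi u := inferInstance
      have hz : IsZero (R.e.obj (R.c M)) :=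
        R.e.map_isZero (IsZero.of_epi_eq_zero u hzero)
      exact Simple.not_isZero M (hz.of_iso (asIso φ).symm)
    · -- u ≠ 0 → IsIso u
      intro hne
      haveI : Mono (R.e.map u) := R.e.map_mono u
      -- first, `e.map u ≫ φ` is a nonzero mono into the simple `M`
      have hcomp_ne : R.e.map u ≫ φ ≠ 0 := by
        intro h0
        exact hne ((cancel_mono (Limits.image.ι (R.γ M))).mp (by
          refine Eq.trans ?_ zero_comp.symm
          exact R.hom_to_r_eq_zero (IsZero.of_mono_eq_zero (R.e.map u)
            (by rwa [← cancel_mono φ, zero_comp])) _))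
      haveI : Mono (R.e.map u ≫ φ) := mono_comp _ _
      haveI : IsIso (R.e.map u ≫ φ) := isIso_of_mono_of_nonzero hcomp_ne
      haveI : IsIso (R.e.map u) := IsIso.of_isIso_comp_right (R.e.map u) φ
      haveI : Epi (R.e.map u) := inferInstance
      -- the cokernel of `u` is killed by `e`
      have hcok : IsZero (R.e.obj (cokernel u)) := by
        have hiso := PreservesCokernel.iso R.e u
        have : IsZero (cokernel (R.e.map u)) :=
          IsZero.of_epi_eq_zero (cokernel.π (R.e.map u)) (cokernel.π_of_epi _)
        exact this.of_iso hiso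
      obtain ⟨a, ⟨ψ⟩⟩ := (R.ker_e (cokernel u)).mpr hcok
      have hia : IsZero (R.e.obj (R.i.obj a)) := (R.ker_e (R.i.obj a)).mp ⟨a, ⟨Iso.refl _⟩⟩
      have hπ : cokernel.π u = 0 := by
        have h0 : factorThruImage (R.γ M) ≫ cokernel.π u ≫ ψ.inv = 0 :=
          R.hom_from_l_eq_zero hia _
        have : cokernel.π u ≫ ψ.inv = 0 :=
          (cancel_epi (factorThruImage (R.γ M))).mp (h0.trans comp_zero.symm)
        rw [← Category.comp_id (cokernel.π u), ← ψ.inv_hom_id, ← Category.assoc, this,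
          zero_comp]
      haveI : Epi u := Abelian.epi_of_cokernel_π_eq_zero u hπ
      exact isIso_of_mono_of_epi u
end

section
/- In a recollement of abelian categories (A, B, C), the intermediate extension functor c: C → B is fully faithful; moreover for any object F of B and M of C, the maps Hom_B(c(M), F) → Hom_C(M, e(F)) and Hom_B(F, c(M)) → Hom_C(e(F), M) induced by applying e are injective. -/
open CategoryTheory Limits

universe v u v₁ u₁ v₂ u₂

variable {A : Type u} {B : Type u₁} {C : Type u₂}
    [Category.{v} A] [Category.{v₁} B] [Category.{v₂} C]
    [Abelian A] [Abelian B] [Abelian C]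

namespace RecAux

variable (R : Recollement A B C)

/-- `e` is injective on `Hom(l M, F)`. -/
lemma einj_l (M : C) (F : B) {f g : R.l.obj M ⟶ F} (h : R.e.map f = R.e.map g) : f = g := by
  apply (R.adj_le.homEquiv M F).injective
  rw [Adjunction.homEquiv_unit, Adjunction.homEquiv_unit, h]

/-- `e` is injective on `Hom(F, r M)`. -/
lemma einj_r (F : B) (M : C) {f g : F ⟶ R.r.obj M} (h : R.e.map f = R.e.map g) : f = g := by
  apply ((R.adj_er.homEquiv F M).symm).injective
  rw [Adjunction.homEquiv_counit, Adjunction.homEquiv_counit, h]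

lemma emap_γ (M : C) :
    R.e.map (R.γ M) =
      (letI := R.unit_le_iso; inv (R.adj_le.unit.app M)) ≫
      (letI := R.counit_er_iso; inv (R.adj_er.counit.app M)) := by
  letI := R.unit_le_iso
  letI := R.counit_er_iso
  have h := R.adj_le.homEquiv_unit (X := M) (Y := R.r.obj M)
    (f := R.γ M)
  have : (R.adj_le.homEquiv M (R.r.obj M)) (R.γ M) = inv (R.adj_er.counit.app M) := by
    simp [Recollement.γ]
  rw [h] at this
  rw [IsIso.eq_inv_comp (R.adj_le.unit.app M)] -- goal: unit ≫ e.map γ = inv counit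
  exact this

lemma isIso_emap_γ (M : C) : IsIso (R.e.map (R.γ M)) := by
  letI := R.unit_le_iso
  letI := R.counit_er_iso
  rw [emap_γ]
  infer_instance

lemma isIso_emap_factor (M : C) : IsIso (R.e.map (factorThruImage (R.γ M))) := by
  haveI : R.e.IsLeftAdjoint := ⟨R.r, ⟨R.adj_er⟩⟩
  haveI hγ := isIso_emap_γ R M
  have hepi : Epi (R.e.map (factorThruImage (R.γ M))) := R.e.map_epi _
  have hfac : R.e.map (factorThruImage (R.γ M)) ≫ R.e.map (image.ι (R.γ M)) =
      R.e.map (R.γ M) := by rw [← R.e.map_comp, image.fac]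
  have : Mono (R.e.map (factorThruImage (R.γ M))) := by
    have : R.e.map (factorThruImage (R.γ M)) ≫
        (R.e.map (image.ι (R.γ M)) ≫ inv (R.e.map (R.γ M))) = 𝟙 _ := by
      rw [← Category.assoc, hfac, IsIso.hom_inv_id]
    exact mono_of_mono_fac this
  exact isIso_of_mono_of_epi _

end RecAux


/-- Applying `e` to `Hom_B(c M, F)` and to `Hom_B(F, c M)` is injective
(identifying `e (c M)` with `M` via the natural isomorphism, this says the maps
`Hom_B(c M, F) → Hom_C(M, e F)` and `Hom_B(F, c M) → Hom_C(e F, M)` are injective);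
moreover `c` is fully faithful: applying `e` gives a bijection
`Hom_B(c M, c N) ≃ Hom_C(e (c M), e (c N))`. -/
theorem recollement_c_fullyFaithful (R : Recollement A B C) :
    (∀ (M : C) (F : B),
        Function.Injective (fun φ : R.c M ⟶ F => R.e.map φ)) ∧
    (∀ (M : C) (F : B),
        Function.Injective (fun φ : F ⟶ R.c M => R.e.map φ)) ∧
    (∀ M N : C,
        Function.Bijective (fun φ : R.c M ⟶ R.c N => R.e.map φ)) := by
  have inj1 : ∀ (M : C) (F : B),
      Function.Injective (fun φ : R.c M ⟶ F => R.e.map φ) := by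
    intro M F φ ψ h
    simp only at h
    refine (cancel_epi (factorThruImage (R.γ M)) (g := φ) (h := ψ)).mp ?_
    apply RecAux.einj_l R M
    exact (R.e.map_comp _ _).trans ((congrArg (R.e.map (factorThruImage (R.γ M)) ≫ ·) h).trans (R.e.map_comp _ _).symm)
  refine ⟨inj1, ?_, ?_⟩
  · intro M F φ ψ h
    simp only at h
    refine (cancel_mono (image.ι (R.γ M)) (g := φ) (h := ψ)).mp ?_
    apply RecAux.einj_r R F M
    exact (R.e.map_comp _ _).trans ((congrArg (· ≫ R.e.map (image.ι (R.γ M))) h).trans (R.e.map_comp _ _).symm)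
  · intro M N
    refine ⟨inj1 M (R.c N), ?_⟩
    intro ψ
    set u := factorThruImage (R.γ M) with hu
    have hiso := RecAux.isIso_emap_factor R M
    -- α : l M ⟶ c N with e.map α = e.map u ≫ ψ
    set α : R.l.obj M ⟶ R.c N :=
      (R.adj_le.homEquiv M (R.c N)).symm
        (R.adj_le.unit.app M ≫ R.e.map u ≫ ψ) with hα
    have hαe : R.e.map α = R.e.map u ≫ ψ := by
      letI := R.unit_le_iso
      have h1 := R.adj_le.homEquiv_unit (X := M) (Y := R.c N)
        (f := (R.adj_le.homEquiv M (R.c N)).symm (R.adj_le.unit.app M ≫ R.e.map u ≫ ψ))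
      rw [Equiv.apply_symm_apply, ← hα] at h1
      exact ((cancel_epi (R.adj_le.unit.app M)).mp h1).symm
    -- kernel condition
    haveI : R.e.IsLeftAdjoint := ⟨R.r, ⟨R.adj_er⟩⟩
    have hker : kernel.ι u ≫ α = 0 := by
      refine (cancel_mono (image.ι (R.γ N)) (g := kernel.ι u ≫ α) (h := 0)).mp ?_
      apply RecAux.einj_r R _ N
      have h0 : R.e.map (kernel.ι u ≫ α) = 0 := by
        rw [R.e.map_comp, hαe]
        have hk : R.e.map (kernel.ι u) ≫ R.e.map u = 0 := by
          rw [← R.e.map_comp, kernel.condition, Functor.map_zero]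
        exact (Category.assoc _ _ _).symm.trans ((congrArg (· ≫ ψ) hk).trans zero_comp)
      exact (R.e.map_comp _ _).trans ((congrArg (· ≫ R.e.map (image.ι (R.γ N))) h0).trans
        (zero_comp.trans (by rw [zero_comp, Functor.map_zero])))
    refine ⟨Abelian.epiDesc u α hker, ?_⟩
    simp only
    have hcomp : u ≫ Abelian.epiDesc u α hker = α := Abelian.comp_epiDesc u α hker
    have := hαe
    rw [← hcomp, R.e.map_comp] at this
    exact (cancel_epi (R.e.map u)).mp this -- e.map u iso hence epi
end

section
/- In a recollement of abelian categories, for an object F of the middle category B the following are equivalent: (1) Hom_B(G, F) = 0 for every G with e(G) = 0; (2) the unit map F → r(e(F)) is a monomorphism; (3) every non-zero subobject F' of F satisfies e(F') ≠ 0; (4) p(F) = 0. -/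
open CategoryTheory Limits

universe v u v₁ u₁ v₂ u₂

variable {A : Type u} {B : Type u₁} {C : Type u₂}
    [Category.{v} A] [Category.{v₁} B] [Category.{v₂} C]
    [Abelian A] [Abelian B] [Abelian C]

section Aux

variable {A : Type u} {B : Type u₁} {C : Type u₂}
    [Category.{v} A] [Category.{v₁} B] [Category.{v₂} C]
    [Abelian A] [Abelian B] [Abelian C]

/-- A mono that is zero has zero source. -/
lemma isZero_of_mono_eq_zero {X Y : B} (f : X ⟶ Y) [Mono f] (h : f = 0) : IsZero X := by
  rw [IsZero.iff_id_eq_zero]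
  have : 𝟙 X ≫ f = 0 ≫ f := by simp [h]
  exact (cancel_mono f).mp this

end Aux

/-- characterizations of stable objects: for `F` in the middle category the
following are equivalent: (1) `Hom(G, F) = 0` whenever `e G = 0`; (2) the unit
`F → r (e F)` is a monomorphism; (3) every non-zero subobject of `F` is not killed by `e`;
(4) `p F = 0`. -/
theorem recollement_stable_tfae (R : Recollement A B C) (F : B) :
    List.TFAE
      [ ∀ (G : B) (f : G ⟶ F), IsZero (R.e.obj G) → f = 0,
        Mono (R.adj_er.unit.app F),
        ∀ (F' : B) (f : F' ⟶ F), Mono f → ¬ IsZero F' → ¬ IsZero (R.e.obj F'),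
        IsZero (R.p.obj F) ] := by
  haveI : R.e.IsRightAdjoint := ⟨R.l, ⟨R.adj_le⟩⟩
  haveI : R.e.IsLeftAdjoint := ⟨R.r, ⟨R.adj_er⟩⟩
  haveI : R.p.IsRightAdjoint := ⟨R.i, ⟨R.adj_ip⟩⟩
  haveI : R.r.IsRightAdjoint := ⟨R.e, ⟨R.adj_er⟩⟩
  haveI : PreservesLimitsOfShape WalkingCospan R.e :=
    R.adj_le.rightAdjoint_preservesLimits.preservesLimitsOfShape
  haveI : PreservesColimitsOfShape WalkingSpan R.e :=
    R.adj_er.leftAdjoint_preservesColimits.preservesColimitsOfShape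
  haveI := R.counit_er_iso
  tfae_have 1 → 2
  | h1 => by
    apply Preadditive.mono_of_kernel_zero
    apply h1
    -- show `IsZero (e.obj (kernel η))`
    have htri : R.e.map (R.adj_er.unit.app F) ≫ R.adj_er.counit.app (R.e.obj F) = 𝟙 _ :=
      R.adj_er.left_triangle_components F
    haveI : IsIso (R.e.map (R.adj_er.unit.app F)) := IsIso.of_isIso_fac_right htri
    have hker : R.e.map (kernel.ι (R.adj_er.unit.app F)) = 0 := by
      apply zero_of_comp_mono (R.e.map (R.adj_er.unit.app F))
      rw [← R.e.map_comp, kernel.condition, R.e.map_zero]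
    exact isZero_of_mono_eq_zero _ hker
  tfae_have 2 → 3
  | h2, F', f, hf, hnz => by
    intro hez
    apply hnz
    have hz : IsZero (R.r.obj (R.e.obj F')) := R.r.map_isZero hez
    have h0 : R.r.map (R.e.map f) = 0 := hz.eq_of_src _ _
    have hcomp : f ≫ R.adj_er.unit.app F = 0 := by
      have := R.adj_er.unit.naturality f
      simp only [Functor.id_map, Functor.comp_map] at this
      rw [this, h0, comp_zero]
    have hf0 : f = 0 := by
      have : f ≫ R.adj_er.unit.app F = 0 ≫ R.adj_er.unit.app F := by simp [hcomp]
      exact (cancel_mono _).mp this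
    exact isZero_of_mono_eq_zero f hf0
  tfae_have 3 → 1
  | h3, G, f, hG => by
    have hmap0 : R.e.map f = 0 := hG.eq_of_src _ _
    have him0 : R.e.map (image.ι f) = 0 := by
      apply zero_of_epi_comp (R.e.map (factorThruImage f))
      rw [← R.e.map_comp, image.fac, hmap0]
    have hime : IsZero (R.e.obj (image f)) := isZero_of_mono_eq_zero _ him0
    have himz : IsZero (image f) := by
      by_contra h
      exact h3 _ (image.ι f) inferInstance h hime
    have : image.ι f = 0 := himz.eq_of_src _ _
    rw [← image.fac f, this, comp_zero]
  tfae_have 1 → 4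
  | h1 => by
    have hz : IsZero (R.e.obj (R.i.obj (R.p.obj F))) := (R.ker_e _).mp ⟨_, ⟨Iso.refl _⟩⟩
    have hc : R.adj_ip.counit.app F = 0 := h1 _ _ hz
    rw [IsZero.iff_id_eq_zero, ← R.adj_ip.right_triangle_components F, hc, R.p.map_zero,
      comp_zero]
  tfae_have 4 → 1
  | h4, G, f, hG => by
    obtain ⟨a, ⟨h⟩⟩ := (R.ker_e G).mpr hG
    have heq : R.adj_ip.homEquiv a F (h.hom ≫ f) = R.adj_ip.homEquiv a F 0 :=
      h4.eq_of_tgt _ _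
    have h0 : h.hom ≫ f = 0 := (R.adj_ip.homEquiv a F).injective heq
    calc f = h.inv ≫ (h.hom ≫ f) := by simp
    _ = 0 := by rw [h0, comp_zero]
  tfae_finish
end

section
/- In a recollement of abelian categories, for an object H of the middle category B the following are equivalent: (1) Hom_B(H, G) = 0 for every G with e(G) = 0; (2) the counit map ℓ(e(H)) → H is an epimorphism; (3) every non-zero quotient object H' of H satisfies e(H') ≠ 0; (4) q(H) = 0. -/
open CategoryTheory Limits

universe v u v₁ u₁ v₂ u₂

variable {A : Type u} {B : Type u₁} {C : Type u₂}
    [Category.{v} A] [Category.{v₁} B] [Category.{v₂} C]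
    [Abelian A] [Abelian B] [Abelian C]

/-- characterizations of costable objects: for `H` in the middle category the
following are equivalent: (1) `Hom(H, G) = 0` whenever `e G = 0`; (2) the counit
`ℓ (e H) → H` is an epimorphism; (3) every non-zero quotient object of `H` is not killed
by `e`; (4) `q H = 0`. -/
theorem recollement_costable_tfae (R : Recollement A B C) (H : B) :
    List.TFAE
      [ ∀ (G : B) (f : H ⟶ G), IsZero (R.e.obj G) → f = 0,
        Epi (R.adj_le.counit.app H),
        ∀ (H' : B) (g : H ⟶ H'), Epi g → ¬ IsZero H' → ¬ IsZero (R.e.obj H'),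
        IsZero (R.q.obj H) ] := by
  tfae_have 1 → 3 := by
    intro h1 H' g hg hH' he
    exact hH' (by
      rw [IsZero.iff_id_eq_zero]
      have hg0 : g = 0 := h1 H' g he
      have : g ≫ 𝟙 H' = g ≫ 0 := by simp [hg0]
      exact (cancel_epi g).mp this)
  tfae_have 3 → 2 := by
    intro h3
    set ε := R.adj_le.counit.app H with hε
    haveI : PreservesColimitsOfSize.{0,0} R.e := R.adj_er.leftAdjoint_preservesColimits
    have hepi : Epi (R.e.map ε) := by
      have h := R.adj_le.right_triangle_components H
      haveI : IsSplitEpi (R.e.map ε) := IsSplitEpi.mk' ⟨_, h⟩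
      infer_instance
    have hez : IsZero (R.e.obj (cokernel ε)) :=
      (isZero_zero C).of_iso (PreservesCokernel.iso R.e ε ≪≫ cokernel.ofEpi (R.e.map ε))
    have hz : IsZero (cokernel ε) := by
      by_contra hc
      exact h3 (cokernel ε) (cokernel.π ε) inferInstance hc hez
    exact Abelian.epi_of_cokernel_π_eq_zero _ (hz.eq_zero_of_tgt _)
  tfae_have 2 → 1 := by
    intro h2 G f hG
    have h0 : R.adj_le.counit.app H ≫ f = 0 := by
      have := (R.adj_le.homEquiv (R.e.obj H) G).symm_apply_apply
        (R.adj_le.counit.app H ≫ f)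
      rw [← this]
      have : (R.adj_le.homEquiv (R.e.obj H) G) (R.adj_le.counit.app H ≫ f) = 0 :=
        hG.eq_zero_of_tgt _
      rw [this, Adjunction.homEquiv_counit]
      haveI := R.adj_le.isLeftAdjoint
      simp [Functor.map_zero]
    haveI := h2
    have : R.adj_le.counit.app H ≫ f = R.adj_le.counit.app H ≫ 0 := by simpa using h0
    exact (cancel_epi _).mp this
  tfae_have 1 → 4 := by
    intro h1
    rw [IsZero.iff_id_eq_zero]
    have hker : IsZero (R.e.obj (R.i.obj (R.q.obj H))) :=
      (R.ker_e _).mp ⟨R.q.obj H, ⟨Iso.refl _⟩⟩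
    have hη : R.adj_qi.unit.app H = 0 := h1 _ _ hker
    have h := R.adj_qi.left_triangle_components H
    rw [hη] at h
    haveI := R.adj_qi.isLeftAdjoint
    simpa [Functor.map_zero] using h.symm
  tfae_have 4 → 1 := by
    intro h4 G f hG
    obtain ⟨a, ⟨φ⟩⟩ := (R.ker_e G).mpr hG
    have key : f ≫ φ.inv = 0 := by
      have := (R.adj_qi.homEquiv H a).apply_symm_apply (f ≫ φ.inv)
      rw [← this]
      have hz : (R.adj_qi.homEquiv H a).symm (f ≫ φ.inv) = 0 := h4.eq_zero_of_src _
      rw [hz, Adjunction.homEquiv_unit]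
      haveI := R.adj_qi.isRightAdjoint
      simp [Functor.map_zero]
    calc f = (f ≫ φ.inv) ≫ φ.hom := by simp
    _ = 0 := by rw [key]; simp
  tfae_finish
end

section
/- In a recollement of abelian categories, an object F of the middle category is both stable and costable (bistable) if and only if F ≅ c(e(F)), where c is the intermediate extension functor. -/
open CategoryTheory Limits

universe v u v₁ u₁ v₂ u₂

variable {A : Type u} {B : Type u₁} {C : Type u₂}
    [Category.{v} A] [Category.{v₁} B] [Category.{v₂} C]
    [Abelian A] [Abelian B] [Abelian C]

/-- An object `F` of the middle category of a recollement is stable if every morphism to it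
from an object killed by `e` is zero. -/
def Recollement.Stable (R : Recollement A B C) (F : B) : Prop :=
  ∀ (G : B) (f : G ⟶ F), IsZero (R.e.obj G) → f = 0

/-- An object `F` of the middle category of a recollement is costable if every morphism from
it to an object killed by `e` is zero. -/
def Recollement.Costable (R : Recollement A B C) (F : B) : Prop :=
  ∀ (G : B) (f : F ⟶ G), IsZero (R.e.obj G) → f = 0

section Aux

open Limits ZeroObject

variable (R : Recollement A B C)

attribute [local instance] CategoryTheory.strongEpi_of_epi

namespace Recollement

lemma hom_zero_to_r {G : B} (hG : IsZero (R.e.obj G)) (M : C) (g : G ⟶ R.r.obj M) :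
    g = 0 := by
  haveI := R.adj_er.isRightAdjoint
  have : g = R.adj_er.homEquiv G M ((R.adj_er.homEquiv G M).symm g) :=
    (Equiv.apply_symm_apply _ _).symm
  rw [this, hG.eq_of_src ((R.adj_er.homEquiv G M).symm g) 0, Adjunction.homEquiv_unit,
    Functor.map_zero, comp_zero]

lemma hom_zero_from_l {G : B} (hG : IsZero (R.e.obj G)) (M : C) (g : R.l.obj M ⟶ G) :
    g = 0 := by
  haveI := R.adj_le.isLeftAdjoint
  have : g = (R.adj_le.homEquiv M G).symm (R.adj_le.homEquiv M G g) :=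
    (Equiv.symm_apply_apply _ _).symm
  rw [this, hG.eq_of_tgt (R.adj_le.homEquiv M G g) 0, Adjunction.homEquiv_counit,
    Functor.map_zero, zero_comp]

lemma stable_c (M : C) : R.Stable (R.c M) := by
  intro G f hG
  have h : f ≫ image.ι (R.γ M) = 0 := R.hom_zero_to_r hG M _
  haveI : Mono (image.ι (R.γ M)) := (Image.monoFactorisation (R.γ M)).m_mono
  exact this.right_cancellation f 0 (by rw [zero_comp]; exact h)

lemma costable_c (M : C) : R.Costable (R.c M) := by
  intro G f hG
  have h : factorThruImage (R.γ M) ≫ f = 0 := R.hom_zero_from_l hG M _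
  haveI : Epi (factorThruImage (R.γ M)) := ⟨fun _ _ w => image.ext _ w⟩
  exact this.left_cancellation f 0 (by rw [h, comp_zero])

lemma eMap_counit_isIso (F : B) : IsIso (R.e.map (R.adj_le.counit.app F)) := by
  haveI := R.unit_le_iso
  haveI : IsIso (R.adj_le.unit.app (R.e.obj F)) := inferInstance
  haveI : IsIso (R.adj_le.unit.app (R.e.obj F) ≫ R.e.map (R.adj_le.counit.app F)) := by
    rw [R.adj_le.right_triangle_components F]; exact IsIso.id _
  exact IsIso.of_isIso_comp_left (R.adj_le.unit.app (R.e.obj F)) _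

lemma eMap_unit_eq_inv (F : B) :
    R.e.map (R.adj_er.unit.app F) =
      (letI := R.counit_er_iso; inv (R.adj_er.counit.app (R.e.obj F))) := by
  letI := R.counit_er_iso
  haveI : IsIso (R.adj_er.counit.app (R.e.obj F)) := inferInstance
  exact (IsIso.inv_eq_of_inv_hom_id (R.adj_er.left_triangle_components F)).symm

lemma counit_comp_unit (F : B) :
    R.adj_le.counit.app F ≫ R.adj_er.unit.app F = R.γ (R.e.obj F) := by
  apply (R.adj_le.homEquiv (R.e.obj F) (R.r.obj (R.e.obj F))).injective
  rw [Recollement.γ, Equiv.apply_symm_apply, Adjunction.homEquiv_unit, Functor.map_comp,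
    ← Category.assoc, R.adj_le.right_triangle_components F, Category.id_comp,
    R.eMap_unit_eq_inv F]

theorem bistable_iff (F : B) :
    (R.Stable F ∧ R.Costable F) ↔ Nonempty (F ≅ R.c (R.e.obj F)) := by
  constructor
  · rintro ⟨hs, hc⟩
    set c1 := R.adj_le.counit.app F with hc1
    set u1 := R.adj_er.unit.app F with hu1
    -- e preserves (co)limits
    haveI : PreservesColimitsOfSize.{0, 0} R.e := R.adj_er.leftAdjoint_preservesColimits
    haveI : PreservesLimitsOfSize.{0, 0} R.e := R.adj_le.rightAdjoint_preservesLimits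
    -- e.map c1 and e.map u1 are isos
    haveI := R.eMap_counit_isIso F
    haveI : IsIso (R.e.map u1) := by
      rw [hu1, R.eMap_unit_eq_inv F]
      letI := R.counit_er_iso
      infer_instance
    -- e kills cokernel c1 and kernel u1
    have hcok : IsZero (R.e.obj (cokernel c1)) := by
      have i1 : R.e.obj (cokernel c1) ≅ cokernel (R.e.map c1) := PreservesCokernel.iso R.e c1
      have i2 : cokernel (R.e.map c1) ≅ 0 := cokernel.ofEpi _
      exact (isZero_zero _).of_iso (i1 ≪≫ i2)
    have hker : IsZero (R.e.obj (kernel u1)) := by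
      have i1 : R.e.obj (kernel u1) ≅ kernel (R.e.map u1) := PreservesKernel.iso R.e u1
      have i2 : kernel (R.e.map u1) ≅ 0 := kernel.ofMono _
      exact (isZero_zero _).of_iso (i1 ≪≫ i2)
    -- c1 is epi, u1 is mono
    haveI : Epi c1 := Abelian.epi_of_cokernel_π_eq_zero _ (hc _ (cokernel.π c1) hcok)
    haveI : Mono u1 := Abelian.mono_of_kernel_ι_eq_zero _ (hs _ (kernel.ι u1) hker)
    exact ⟨image.isoStrongEpiMono c1 u1 (R.counit_comp_unit F)⟩
  · rintro ⟨i⟩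
    constructor
    · intro G f hG
      have : (f ≫ i.hom) = 0 := R.stable_c (R.e.obj F) G (f ≫ i.hom) hG
      calc f = (f ≫ i.hom) ≫ i.inv := by simp
        _ = 0 := by rw [this, zero_comp]
    · intro G f hG
      have : (i.inv ≫ f) = 0 := R.costable_c (R.e.obj F) G (i.inv ≫ f) hG
      calc f = i.hom ≫ (i.inv ≫ f) := by simp
        _ = 0 := by rw [this, comp_zero]

end Recollement

end Aux

/-- an object `F` of the middle category is bistable (stable and costable) if
and only if `F ≅ c (e F)`. -/
theorem recollement_bistable_iff (R : Recollement A B C) (F : B) :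
    (R.Stable F ∧ R.Costable F) ↔ Nonempty (F ≅ R.c (R.e.obj F)) := by
  exact R.bistable_iff F
end

section
/- Let A be a finite-dimensional algebra, let Q be the category whose objects are surjective A-module homomorphisms f: P → X with P finitely generated projective, and morphisms commutative squares. If (θ, φ): (f: P → X) → (f': P' → X') is a morphism in Q such that θ: P → P' is a split monomorphism, then (θ, φ) becomes a monomorphism in the homotopy category H = Q/E, where E is the ideal of morphisms factoring through objects of the form 1: P'' → P''. -/
open CategoryTheory Limits

universe u

/-- An object of the category `Q`: a surjection `f : P → X` of finite-dimensional
`A`-modules with `P` projective. -/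
structure QObj (A : Type u) [Ring A] : Type (u + 1) where
  P : ModuleCat.{u} A
  X : ModuleCat.{u} A
  f : P ⟶ X
  surj : Function.Surjective f
  proj : Projective P
  finP : Module.Finite A P
  finX : Module.Finite A X

variable (K : Type u) {A : Type u} [Field K] [Ring A] [Algebra K A]

/-- Morphisms in `Q`: commuting squares `(t, s)` with `t ≫ f' = f ≫ s`, as a
`K`-submodule of the product. -/
def QHomSub (a b : QObj A) : Submodule K ((a.P ⟶ b.P) × (a.X ⟶ b.X)) where
  carrier := {ts | ts.1 ≫ b.f = a.f ≫ ts.2}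
  add_mem' := by
    intro x y hx hy
    simp only [Set.mem_setOf_eq, Prod.fst_add, Prod.snd_add, Preadditive.add_comp,
      Preadditive.comp_add] at *
    rw [hx, hy]
  zero_mem' := by simp
  smul_mem' := by
    intro k x hx
    simp only [Set.mem_setOf_eq, Prod.smul_fst, Prod.smul_snd, Linear.smul_comp,
      Linear.comp_smul] at *
    rw [hx]

theorem QHomSub_prop {a b : QObj A} (s : QHomSub K a b) :
    s.1.1 ≫ b.f = a.f ≫ s.1.2 := s.2

/-- The submodule of null-homotopic morphisms: those `(t, s)` with `t = f ≫ h` and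
`s = h ≫ f'` for some `h : X → P'`. -/
def Htp (a b : QObj A) : Submodule K (QHomSub K a b) where
  carrier := {ts | ∃ h : a.X ⟶ b.P, ts.1.1 = a.f ≫ h ∧ ts.1.2 = h ≫ b.f}
  add_mem' := by
    rintro x y ⟨h, hx1, hx2⟩ ⟨h', hy1, hy2⟩
    refine ⟨h + h', ?_, ?_⟩ <;>
      simp only [Submodule.coe_add, Prod.fst_add, Prod.snd_add, Preadditive.comp_add,
        Preadditive.add_comp, hx1, hx2, hy1, hy2]
  zero_mem' := ⟨0, by simp, by simp⟩
  smul_mem' := by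
    rintro k x ⟨h, hx1, hx2⟩
    refine ⟨k • h, ?_, ?_⟩ <;>
      simp only [SetLike.val_smul, Prod.smul_fst, Prod.smul_snd, Linear.comp_smul,
        Linear.smul_comp, hx1, hx2]

/-- The homotopy category `H = Q/E`: same objects as `Q`, morphisms are homotopy classes. -/
def HCat (K A : Type u) [Field K] [Ring A] [Algebra K A] : Type (u + 1) := QObj A

/-- Composition of representatives. -/
def compQ {a b c : QObj A} (s : QHomSub K a b) (t : QHomSub K b c) : QHomSub K a c :=
  ⟨(s.1.1 ≫ t.1.1, s.1.2 ≫ t.1.2), by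
    show (s.1.1 ≫ t.1.1) ≫ c.f = a.f ≫ s.1.2 ≫ t.1.2
    rw [Category.assoc, QHomSub_prop, ← Category.assoc, QHomSub_prop, Category.assoc]⟩

theorem compQ_left_htp {a b c : QObj A} (s : QHomSub K a b) (t : QHomSub K b c)
    (hs : s ∈ Htp K a b) : compQ K s t ∈ Htp K a c := by
  obtain ⟨h, h1, h2⟩ := hs
  refine ⟨h ≫ t.1.1, ?_, ?_⟩
  · show s.1.1 ≫ t.1.1 = a.f ≫ h ≫ t.1.1
    rw [h1, Category.assoc]
  · show s.1.2 ≫ t.1.2 = (h ≫ t.1.1) ≫ c.f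
    rw [h2, Category.assoc, Category.assoc, QHomSub_prop]

theorem compQ_right_htp {a b c : QObj A} (s : QHomSub K a b) (t : QHomSub K b c)
    (ht : t ∈ Htp K b c) : compQ K s t ∈ Htp K a c := by
  obtain ⟨h, h1, h2⟩ := ht
  refine ⟨s.1.2 ≫ h, ?_, ?_⟩
  · show s.1.1 ≫ t.1.1 = a.f ≫ s.1.2 ≫ h
    rw [h1, ← Category.assoc, QHomSub_prop, Category.assoc]
  · show s.1.2 ≫ t.1.2 = (s.1.2 ≫ h) ≫ c.f
    rw [h2, Category.assoc]

theorem compQ_sub_sub {a b c : QObj A} (s s' : QHomSub K a b) (t t' : QHomSub K b c) :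
    compQ K s t - compQ K s' t' = compQ K (s - s') t + compQ K s' (t - t') := by
  apply Subtype.ext
  apply Prod.ext <;>
    simp [compQ, Preadditive.sub_comp, Preadditive.comp_sub]

instance : Category (HCat K A) where
  Hom a b := QHomSub K a b ⧸ Htp K a b
  id a := Submodule.Quotient.mk ⟨(𝟙 a.P, 𝟙 a.X), by simp [QHomSub]⟩
  comp {a b c} x y := Quotient.liftOn₂ x y
    (fun s t => Submodule.Quotient.mk (compQ K s t))
    (by
      intro s t s' t' hs ht
      have hs' : s - s' ∈ Htp K a b := (Submodule.quotientRel_def _).mp hs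
      have ht' : t - t' ∈ Htp K b c := (Submodule.quotientRel_def _).mp ht
      rw [Submodule.Quotient.eq]
      have e := compQ_sub_sub K s s' t t'
      have h := (Htp K a c).add_mem (compQ_left_htp K _ t hs') (compQ_right_htp K s' _ ht')
      exact (congrArg (fun z => z ∈ Htp K a c) e).mpr h)
  id_comp := by
    rintro a b ⟨s⟩
    show Submodule.Quotient.mk (compQ K _ s) = Submodule.Quotient.mk s
    congr 1
  comp_id := by
    rintro a b ⟨s⟩
    show Submodule.Quotient.mk (compQ K s _) = Submodule.Quotient.mk s
    congr 1
  assoc := by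
    rintro a b c d ⟨s⟩ ⟨t⟩ ⟨v⟩
    show Submodule.Quotient.mk (compQ K (compQ K s t) v)
      = Submodule.Quotient.mk (compQ K s (compQ K t v))
    congr 1

/-- if `(θ, φ)` is a morphism in `Q` whose first component `θ` is a split
monomorphism, then its homotopy class is a monomorphism in the homotopy category
`H = Q/E`. -/
theorem mono_in_homotopy_category_of_split_mono
    {K A : Type u} [Field K] [Ring A] [Algebra K A]
    (a b : HCat K A) (ts : QHomSub K a b)
    (hsplit : ∃ ρ : b.P ⟶ a.P, ts.1.1 ≫ ρ = 𝟙 a.P) :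
    Mono (show a ⟶ b from Submodule.Quotient.mk ts) := by
  obtain ⟨ρ, hρ⟩ := hsplit
  constructor
  rintro c ⟨s⟩ ⟨s'⟩ hss
  have key : ∀ w : QHomSub K c a, compQ K w ts ∈ Htp K c b → w ∈ Htp K c a := by
    rintro w ⟨h, h1, h2⟩
    replace h1 : w.1.1 ≫ ts.1.1 = c.f ≫ h := h1
    have hepi : Epi c.f := (ModuleCat.epi_iff_surjective c.f).mpr c.surj
    refine ⟨h ≫ ρ, ?_, ?_⟩
    · rw [← Category.assoc, ← h1, Category.assoc, hρ, Category.comp_id]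
    · rw [← cancel_epi c.f, ← QHomSub_prop K w]
      simp only [← Category.assoc]
      rw [← h1]
      simp only [Category.assoc]
      rw [reassoc_of% hρ]
  have hmem : compQ K s ts - compQ K s' ts ∈ Htp K c b := by
    rw [← Submodule.Quotient.eq]
    exact hss
  have hz : compQ K s' (ts - ts) = 0 := by
    apply Subtype.ext; apply Prod.ext <;> simp [compQ]
  have : compQ K (s - s') ts ∈ Htp K c b := by
    have := compQ_sub_sub K s s' ts ts
    rw [hz, add_zero] at this
    rwa [← this]
  exact Quot.sound ((Submodule.quotientRel_def _).mpr (key _ this))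
end
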